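/- For every real number x, sin(π(i−x))/sin(π(i+x)) = exp( 2i·( πx + ∑_{n ≥ 1} (e^{−2πn}/n)·sin(2πnx) ) ). In particular the function G(x) := sin(π(i−x))/sin(π(i+x)) has modulus 1 at every real x. -/

import Mathlib

open Complex Real

private lemma bpp_aux (x : ℝ) :
    Complex.sin ((π : ℂ) * (I - (x : ℂ))) / Complex.sin ((π : ℂ) * (I + (x : ℂ))) =
      Complex.exp (2 * I * ((π : ℂ) * (x : ℂ) +
        ((∑' n : ℕ, Real.exp (-2 * π * (n + 1)) / (n + 1) * Real.sin (2 * π * (n + 1) * x)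
          : ℝ) : ℂ))) := by
  set a : ℕ → ℝ := fun n => Real.exp (-2 * π * (n + 1)) / (n + 1) * Real.sin (2 * π * (n + 1) * x)
    with ha
  set z : ℂ := Complex.exp ((-(2*π) : ℝ) + (2*π*x : ℝ) * I) with hzdef
  set w : ℂ := Complex.exp ((-(2*π) : ℝ) - (2*π*x : ℝ) * I) with hwdef
  have hre : Real.exp (-(2*π)) < 1 := Real.exp_lt_one_iff.mpr (by nlinarith [Real.pi_pos])
  have hnz : ‖z‖ < 1 := by
    rw [hzdef, Complex.norm_exp]
    simpa using hre
  have hnw : ‖w‖ < 1 := by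
    rw [hwdef, Complex.norm_exp]
    simpa using hre
  have h1z : (1 : ℂ) - z ≠ 0 := by
    intro h
    have : z = 1 := by linear_combination -h
    rw [this] at hnz; simp at hnz
  have h1w : (1 : ℂ) - w ≠ 0 := by
    intro h
    have : w = 1 := by linear_combination -h
    rw [this] at hnw; simp at hnw
  -- summability of the real series
  have hsa : Summable a := by
    refine Summable.of_norm_bounded (g := fun n => Real.exp (-(2*π)) * Real.exp (-(2*π)) ^ n)
      ((summable_geometric_of_lt_one (Real.exp_nonneg _) hre).mul_left _) fun n => ?_
    have h1 : Real.exp (-2 * π * (n + 1)) = Real.exp (-(2*π)) * Real.exp (-(2*π)) ^ n := by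
      rw [← Real.exp_nat_mul, ← Real.exp_add]; ring_nf
    have hn1 : (1 : ℝ) ≤ |(n : ℝ) + 1| := by
      rw [_root_.abs_of_nonneg (by positivity)]
      linarith [Nat.cast_nonneg (α := ℝ) n]
    rw [ha]
    simp only [Real.norm_eq_abs, abs_mul, abs_div, _root_.abs_of_nonneg (Real.exp_nonneg
      (-2 * π * ((n : ℝ) + 1)))]
    calc Real.exp (-2 * π * (n + 1)) / |((n:ℝ) + 1)| * |Real.sin (2 * π * (n + 1) * x)|
        ≤ Real.exp (-2 * π * (n + 1)) / 1 * 1 := by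
          gcongr
          · exact Real.abs_sin_le_one _
      _ = Real.exp (-(2*π)) * Real.exp (-(2*π)) ^ n := by rw [div_one, mul_one, h1]
  set S : ℝ := ∑' n, a n with hSdef
  have hS : HasSum a S := hsa.hasSum
  have hSc : HasSum (fun n => 2 * I * ((a n : ℝ) : ℂ)) (2 * I * (S : ℂ)) :=
    (Complex.hasSum_ofReal.mpr hS).mul_left _
  -- the complex log series
  have hA : HasSum (fun n : ℕ => z ^ n / n) (-Complex.log (1 - z)) :=
    Complex.hasSum_taylorSeries_neg_log hnz
  have hB : HasSum (fun n : ℕ => w ^ n / n) (-Complex.log (1 - w)) :=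
    Complex.hasSum_taylorSeries_neg_log hnw
  set T : ℂ := Complex.log (1 - w) - Complex.log (1 - z) with hTdef
  have hAB : HasSum (fun n : ℕ => z ^ n / n - w ^ n / n) T := by
    have := hA.sub hB
    rw [hTdef, show Complex.log (1 - w) - Complex.log (1 - z)
      = -Complex.log (1 - z) - -Complex.log (1 - w) by ring]
    exact this
  have hshift : HasSum (fun n : ℕ => z ^ (n+1) / ((n:ℂ)+1) - w ^ (n+1) / ((n:ℂ)+1)) T := by
    have := (hasSum_nat_add_iff (f := fun n : ℕ => z ^ n / n - w ^ n / n) 1).mpr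
      (by simpa using hAB)
    convert this using 2 with n
    · rfl
    push_cast
    ring
  -- identify the terms
  have key : ∀ θ : ℝ, Complex.exp ((θ:ℂ) * I) - Complex.exp (-((θ:ℂ) * I))
      = 2 * I * ((Real.sin θ : ℝ) : ℂ) := by
    intro θ
    rw [show -((θ:ℂ) * I) = (-θ:ℂ) * I by ring, Complex.exp_mul_I, Complex.exp_mul_I,
      Complex.cos_neg, Complex.sin_neg, Complex.ofReal_sin]
    ring
  have hterm : ∀ n : ℕ, z ^ (n+1) / ((n:ℂ)+1) - w ^ (n+1) / ((n:ℂ)+1)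
      = 2 * I * ((a n : ℝ) : ℂ) := by
    intro n
    have hz1 : z ^ (n+1) = Complex.exp ((-2 * π * (n+1) : ℝ) + (2*π*(n+1)*x : ℝ) * I) := by
      rw [hzdef, ← Complex.exp_nat_mul]
      congr 1
      push_cast
      ring
    have hw1 : w ^ (n+1) = Complex.exp ((-2 * π * (n+1) : ℝ) - (2*π*(n+1)*x : ℝ) * I) := by
      rw [hwdef, ← Complex.exp_nat_mul]
      congr 1
      push_cast
      ring
    have hn1 : ((n:ℂ) + 1) ≠ 0 := by
      intro h
      have := congrArg Complex.re h
      simp at this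
      linarith [Nat.cast_nonneg (α := ℝ) n]
    have hE : ((Real.exp (-2 * π * ((n:ℝ)+1)) : ℝ) : ℂ)
        = Complex.exp ((-2 * π * ((n:ℝ)+1) : ℝ) : ℂ) := Complex.ofReal_exp _
    have hz2 : z ^ (n+1) = ((Real.exp (-2 * π * ((n:ℝ)+1)) : ℝ) : ℂ)
        * Complex.exp (((2*π*((n:ℝ)+1)*x : ℝ) : ℂ) * I) := by
      rw [hz1, hE, ← Complex.exp_add]
    have hw2 : w ^ (n+1) = ((Real.exp (-2 * π * ((n:ℝ)+1)) : ℝ) : ℂ)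
        * Complex.exp (-(((2*π*((n:ℝ)+1)*x : ℝ) : ℂ) * I)) := by
      rw [hw1, hE, ← Complex.exp_add, sub_eq_add_neg]
    have hcast : ((a n : ℝ) : ℂ) = ((Real.exp (-2 * π * ((n:ℝ)+1)) : ℝ) : ℂ) / ((n:ℂ)+1)
        * ((Real.sin (2*π*((n:ℝ)+1)*x) : ℝ) : ℂ) := by
      rw [ha]
      push_cast
      ring
    rw [hz2, hw2, hcast]
    linear_combination ((((Real.exp (-2 * π * ((n:ℝ)+1)) : ℝ) : ℂ)) / ((n:ℂ)+1))
      * key (2*π*((n:ℝ)+1)*x)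
  simp only [hterm] at hshift
  have hT : T = 2 * I * (S : ℂ) := hshift.unique hSc
  -- numerator and denominator factorizations
  have hnum : Complex.sin ((π : ℂ) * (I - (x : ℂ)))
      = Complex.exp ((π : ℝ) + (π * x : ℝ) * I) * (1 - w) * I / 2 := by
    have e1 : -((π:ℂ) * (I - (x:ℂ))) * I = ((π : ℝ) : ℂ) + ((π * x : ℝ) : ℂ) * I := by
      push_cast
      linear_combination (-(π:ℂ)) * Complex.I_sq
    have e2 : ((π:ℂ) * (I - (x:ℂ))) * I
        = (((π : ℝ) : ℂ) + ((π * x : ℝ) : ℂ) * I) + (((-(2*π) : ℝ) : ℂ) - ((2*π*x : ℝ) : ℂ) * I) := by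
      push_cast
      linear_combination (π:ℂ) * Complex.I_sq
    rw [Complex.sin, e1, e2, Complex.exp_add (((π : ℝ) : ℂ) + ((π * x : ℝ) : ℂ) * I)
      (((-(2*π) : ℝ) : ℂ) - ((2*π*x : ℝ) : ℂ) * I), hwdef]
    ring
  have hden : Complex.sin ((π : ℂ) * (I + (x : ℂ)))
      = Complex.exp ((π : ℝ) - (π * x : ℝ) * I) * (1 - z) * I / 2 := by
    have e1 : -((π:ℂ) * (I + (x:ℂ))) * I = ((π : ℝ) : ℂ) - ((π * x : ℝ) : ℂ) * I := by
      push_cast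
      linear_combination (-(π:ℂ)) * Complex.I_sq
    have e2 : ((π:ℂ) * (I + (x:ℂ))) * I
        = (((π : ℝ) : ℂ) - ((π * x : ℝ) : ℂ) * I) + (((-(2*π) : ℝ) : ℂ) + ((2*π*x : ℝ) : ℂ) * I) := by
      push_cast
      linear_combination (π:ℂ) * Complex.I_sq
    rw [Complex.sin, e1, e2, Complex.exp_add (((π : ℝ) : ℂ) - ((π * x : ℝ) : ℂ) * I)
      (((-(2*π) : ℝ) : ℂ) + ((2*π*x : ℝ) : ℂ) * I), hzdef]
    ring
  -- put it together
  have hexpT : Complex.exp T = (1 - w) / (1 - z) := by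
    rw [hTdef, Complex.exp_sub, Complex.exp_log h1w, Complex.exp_log h1z]
  have hkey : Complex.exp (2 * I * ((π : ℂ) * (x : ℂ) + (S : ℂ)))
      = Complex.exp (((2*π*x : ℝ) : ℂ) * I) * ((1 - w) / (1 - z)) := by
    rw [show 2 * I * ((π : ℂ) * (x : ℂ) + (S : ℂ)) = ((2*π*x : ℝ) : ℂ) * I + 2 * I * (S : ℂ) from
      by push_cast; ring]
    rw [Complex.exp_add, ← hT, hexpT]
  rw [hnum, hden, hkey]
  have hE : Complex.exp (((π : ℝ) : ℂ) + ((π * x : ℝ) : ℂ) * I)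
      = Complex.exp (((2*π*x : ℝ) : ℂ) * I) * Complex.exp (((π : ℝ) : ℂ) - ((π * x : ℝ) : ℂ) * I) := by
    rw [← Complex.exp_add]
    congr 1
    push_cast
    ring
  rw [hE]
  have h2 : (Complex.exp (((π : ℝ) : ℂ) - ((π * x : ℝ) : ℂ) * I)) ≠ 0 := Complex.exp_ne_zero _
  field_simp

theorem blaschke_product_phase (x : ℝ) :
    Complex.sin ((π : ℂ) * (I - (x : ℂ))) / Complex.sin ((π : ℂ) * (I + (x : ℂ))) =
      Complex.exp (2 * I * ((π : ℂ) * (x : ℂ) +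
        ((∑' n : ℕ, Real.exp (-2 * π * (n + 1)) / (n + 1) * Real.sin (2 * π * (n + 1) * x)
          : ℝ) : ℂ))) ∧
    ‖(Complex.sin ((π : ℂ) * (I - (x : ℂ))) / Complex.sin ((π : ℂ) * (I + (x : ℂ))))‖ = 1 := by
  refine ⟨bpp_aux x, ?_⟩
  rw [bpp_aux x, Complex.norm_exp]
  convert Real.exp_zero using 2
  simp [Complex.mul_re, Complex.add_re, Complex.mul_im]
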